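/- arXiv:1307.4470 — 2 statements merged into one kernel-verified Lean document; each statement's English description precedes it below -/
import Mathlib

section
/- Let φ be a HyLTL⁺ formula over A and FC, and let 𝒜 = (Q, q₀, δ, F) be a Büchi automaton over the alphabet of subsets of AP = FC ⊎ B whose accepted language is exactly the set of discrete sequences Σ with Σ,1 ⊨ γ(φ). Let ℋ_φ be the BHA constructed from 𝒜 as described. Then for every hybrid trace α over A and X: ℋ_φ accepts α if and only if α,1 ⊨ φ. -/
/-! ## Valus, trajectories and flow constraints -/

/-- A valuation over the variables `X`. -/
abbrev Valu (X : Type) := X → ℝ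

/-- A flow constraint over `X`: a set of pairs (value, derivative) of valuations. -/
abbrev FlowConstraint (X : Type) := Set (Valu X × Valu X)

/-- A trajectory over `X`: a nonnegative duration together with a map `ℝ → Valu X`
(only its values on `[0, dur]` matter). -/
structure Traj (X : Type) where
  dur : ℝ
  dur_nonneg : 0 ≤ dur
  f : ℝ → Valu X

namespace Traj

variable {X : Type}

/-- A trajectory satisfies a flow constraint iff at every time of its domain the pair
(value, derivative) belongs to the constraint. -/
def sat (τ : Traj X) (C : FlowConstraint X) : Prop :=
  ∀ t ∈ Set.Icc (0 : ℝ) τ.dur,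
    (τ.f t, fun x => deriv (fun s => τ.f s x) t) ∈ C

def firstState (τ : Traj X) : Valu X := τ.f 0

def lastState (τ : Traj X) : Valu X := τ.f τ.dur

/-- Identification of trajectories: same duration and same values on the domain. -/
def Equiv (τ τ' : Traj X) : Prop :=
  τ.dur = τ'.dur ∧ ∀ t ∈ Set.Icc (0 : ℝ) τ.dur, τ.f t = τ'.f t

/-- The restriction `τ↾[t,t']` of a trajectory. -/
def restrict (τ : Traj X) (t t' : ℝ) (h : t ≤ t') : Traj X :=
  ⟨t' - t, sub_nonneg.mpr h, fun s => τ.f (s + t)⟩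

/-- Concatenation of two trajectories. -/
noncomputable def concat (τ₁ τ₂ : Traj X) : Traj X :=
  ⟨τ₁.dur + τ₂.dur, add_nonneg τ₁.dur_nonneg τ₂.dur_nonneg,
   fun s => if s ≤ τ₁.dur then τ₁.f s else τ₂.f (s - τ₁.dur)⟩

end Traj

/-! ## Hybrid traces -/

/-- A hybrid trace `τ₁ a₁ τ₂ a₂ …` over `A` and `X`, 0-indexed:
`traj n` is `τ_{n+1}` and `act n` is `a_{n+1}`. -/
structure HybridTrace (X A : Type) where
  traj : ℕ → Traj X
  act : ℕ → A

/-- Concatenation `g m · g (m+1) · ⋯ · g n` of a segment of trajectories. -/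
noncomputable def concatSeg {X : Type} (g : ℕ → Traj X) (m n : ℕ) : Traj X :=
  ((List.range (n - m)).map (fun i => g (m + 1 + i))).foldl Traj.concat (g m)

/-- A hybrid trace over `A ∪ {T}` (with `T = none`) has infinitely many actions in `A`. -/
def HybridTrace.InfA {X A : Type} (β : HybridTrace X (Option A)) : Prop :=
  ∀ N, ∃ n, N ≤ n ∧ (β.act n).isSome

/-- The restriction `β↾A` of a hybrid trace over `A ∪ {T}` (with `T = none`) to `A`:
delete the occurrences of `T` and concatenate the adjacent trajectories.  (It is
intended to be applied to traces having infinitely many actions in `A`.) -/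
noncomputable def HybridTrace.restrictA {X A : Type} [Inhabited A]
    (β : HybridTrace X (Option A)) : HybridTrace X A :=
  letI k : ℕ → ℕ := Nat.nth (fun n => (β.act n).isSome)
  { traj := fun i =>
      match i with
      | 0 => concatSeg β.traj 0 (k 0)
      | i + 1 => concatSeg β.traj (k i + 1) (k (i + 1))
    act := fun i => (β.act (k i)).getD default }

/-- Identification of hybrid traces (pointwise identification of trajectories). -/
def HybridTrace.Equiv {X A : Type} (α α' : HybridTrace X A) : Prop :=
  (∀ i, (α.traj i).Equiv (α'.traj i)) ∧ ∀ i, α.act i = α'.act i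

/-! ## HyLTL syntax and semantics -/

/-- HyLTL formulas over actions `A` and flow-constraint atoms `F`. -/
inductive HyLTL (A F : Type) : Type where
  | flow : F → HyLTL A F
  | act : A → HyLTL A F
  | not : HyLTL A F → HyLTL A F
  | and : HyLTL A F → HyLTL A F → HyLTL A F
  | or : HyLTL A F → HyLTL A F → HyLTL A F
  | next : HyLTL A F → HyLTL A F
  | untl : HyLTL A F → HyLTL A F → HyLTL A F
  | rel : HyLTL A F → HyLTL A F → HyLTL A F

/-- Satisfaction of a HyLTL formula by a hybrid trace at a (0-indexed) position;
`I` interprets flow-constraint atoms.  Position `i` here is position `i+1` of the paper. -/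
def HyLTL.Sat {X A F : Type} (I : F → FlowConstraint X) (α : HybridTrace X A) :
    HyLTL A F → ℕ → Prop
  | .flow f, i => (α.traj i).sat (I f)
  | .act a, i => 0 < i ∧ α.act (i - 1) = a
  | .not φ, i => ¬ HyLTL.Sat I α φ i
  | .and φ ψ, i => HyLTL.Sat I α φ i ∧ HyLTL.Sat I α ψ i
  | .or φ ψ, i => HyLTL.Sat I α φ i ∨ HyLTL.Sat I α ψ i
  | .next φ, i => HyLTL.Sat I α φ (i + 1)
  | .untl φ ψ, i =>
      ∃ j, i ≤ j ∧ HyLTL.Sat I α ψ j ∧ ∀ k, i ≤ k → k < j → HyLTL.Sat I α φ k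
  | .rel φ ψ, i =>
      ∀ j, i ≤ j → (∀ k, i ≤ k → k < j → ¬ HyLTL.Sat I α φ k) → HyLTL.Sat I α ψ j

/-- Negation normal form: negation applied only to actions and flow constraints. -/
inductive HyLTL.NNF {A F : Type} : HyLTL A F → Prop
  | flow (f : F) : NNF (.flow f)
  | act (a : A) : NNF (.act a)
  | nflow (f : F) : NNF (.not (.flow f))
  | nact (a : A) : NNF (.not (.act a))
  | and {φ ψ} : NNF φ → NNF ψ → NNF (.and φ ψ)
  | or {φ ψ} : NNF φ → NNF ψ → NNF (.or φ ψ)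
  | next {φ} : NNF φ → NNF (.next φ)
  | untl {φ ψ} : NNF φ → NNF ψ → NNF (.untl φ ψ)
  | rel {φ ψ} : NNF φ → NNF ψ → NNF (.rel φ ψ)

/-- HyLTL⁺ formulas: flow constraints occur only positively. -/
inductive HyLTL.Positive {A F : Type} : HyLTL A F → Prop
  | flow (f : F) : Positive (.flow f)
  | act (a : A) : Positive (.act a)
  | nact (a : A) : Positive (.not (.act a))
  | and {φ ψ} : Positive φ → Positive ψ → Positive (.and φ ψ)
  | or {φ ψ} : Positive φ → Positive ψ → Positive (.or φ ψ)
  | next {φ} : Positive φ → Positive (.next φ)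
  | untl {φ ψ} : Positive φ → Positive ψ → Positive (.untl φ ψ)
  | rel {φ ψ} : Positive φ → Positive ψ → Positive (.rel φ ψ)

/-- The translation π from NNF HyLTL formulas over `A` to HyLTL⁺ formulas over
`A ∪ {T}`, where the fresh action `T` is `none` and flow atoms are semantic flow
constraints (so that the dual constraint `f̄` is the set complement `fᶜ`). -/
def piTr {X A : Type} : HyLTL A (FlowConstraint X) → HyLTL (Option A) (FlowConstraint X)
  | .flow f =>
      .and (.flow f) (.next (.untl (.and (.act none) (.flow f)) (.not (.act none))))
  | .act a => .act (some a)
  | .not (.flow f) =>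
      .or (.flow fᶜ) (.next (.untl (.act none) (.and (.act none) (.flow fᶜ))))
  | .not (.act a) => .not (.act (some a))
  | .not φ => .not (piTr φ)
  | .and φ ψ => .and (piTr φ) (piTr ψ)
  | .or φ ψ => .or (piTr φ) (piTr ψ)
  | .next φ => .next (.untl (.act none) (.and (.not (.act none)) (piTr φ)))
  | .untl φ ψ => .untl (.or (.act none) (piTr φ)) (.and (.not (.act none)) (piTr ψ))
  | .rel φ ψ => .rel (.and (.not (.act none)) (piTr φ)) (.or (.act none) (piTr ψ))

/-! ## Discrete LTL -/

/-- LTL formulas over atomic propositions `P`. -/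
inductive LTL (P : Type) : Type where
  | atom : P → LTL P
  | not : LTL P → LTL P
  | and : LTL P → LTL P → LTL P
  | or : LTL P → LTL P → LTL P
  | next : LTL P → LTL P
  | untl : LTL P → LTL P → LTL P
  | rel : LTL P → LTL P → LTL P

/-- Satisfaction of an LTL formula by a discrete sequence (0-indexed: position `i`
here is position `i+1` of the paper). -/
def LTL.Sat {P : Type} (w : ℕ → Set P) : LTL P → ℕ → Prop
  | .atom p, i => p ∈ w i
  | .not γ, i => ¬ LTL.Sat w γ i
  | .and γ δ, i => LTL.Sat w γ i ∧ LTL.Sat w δ i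
  | .or γ δ, i => LTL.Sat w γ i ∨ LTL.Sat w δ i
  | .next γ, i => LTL.Sat w γ (i + 1)
  | .untl γ δ, i =>
      ∃ j, i ≤ j ∧ LTL.Sat w δ j ∧ ∀ k, i ≤ k → k < j → LTL.Sat w γ k
  | .rel γ δ, i =>
      ∀ j, i ≤ j → (∀ k, i ≤ k → k < j → ¬ LTL.Sat w γ k) → LTL.Sat w δ j

/-- Conjunction `γ₁ ∧ (γ₂ ∧ (⋯ ∧ γₙ))` of a nonempty list of LTL formulas. -/
def LTL.bigConj {P : Type} : (l : List (LTL P)) → l ≠ [] → LTL P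
  | [], h => absurd rfl h
  | [γ], _ => γ
  | γ :: δ :: l, _ => .and γ (LTL.bigConj (δ :: l) (by simp))

/-- `γ` contains no atom from `FC` (the left summand). -/
def LTL.noFC {FC B : Type} : LTL (FC ⊕ B) → Prop
  | .atom (Sum.inl _) => False
  | .atom (Sum.inr _) => True
  | .not γ => LTL.noFC γ
  | .and γ δ => LTL.noFC γ ∧ LTL.noFC δ
  | .or γ δ => LTL.noFC γ ∧ LTL.noFC δ
  | .next γ => LTL.noFC γ
  | .untl γ δ => LTL.noFC γ ∧ LTL.noFC δ
  | .rel γ δ => LTL.noFC γ ∧ LTL.noFC δ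

/-- `γ` is FC-positive: no atom from `FC` occurs within the scope of a negation. -/
def LTL.FCpos {FC B : Type} : LTL (FC ⊕ B) → Prop
  | .atom _ => True
  | .not γ => LTL.noFC γ
  | .and γ δ => LTL.FCpos γ ∧ LTL.FCpos δ
  | .or γ δ => LTL.FCpos γ ∧ LTL.FCpos δ
  | .next γ => LTL.FCpos γ
  | .untl γ δ => LTL.FCpos γ ∧ LTL.FCpos δ
  | .rel γ δ => LTL.FCpos γ ∧ LTL.FCpos δ

/-! ## The translation γ from HyLTL to LTL -/

/-- The formula `𝐛(a)`: the conjunction of the letters in `b a` and of the negations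
of the letters not in `b a` (given that `b a` is nonempty). -/
noncomputable def bEnc {A FC B : Type} [Fintype B] [DecidableEq B]
    (b : A → Finset B) (hb : ∀ a, (b a).Nonempty) (a : A) : LTL (FC ⊕ B) :=
  LTL.bigConj
    (((b a).toList.map fun j => LTL.atom (Sum.inr j : FC ⊕ B)) ++
      ((Finset.univ \ b a).toList.map fun j => LTL.not (LTL.atom (Sum.inr j : FC ⊕ B))))
    (by
      intro h
      rcases List.append_eq_nil_iff.mp h with ⟨h1, -⟩
      exact (hb a).ne_empty (Finset.toList_eq_nil.mp (List.map_eq_nil_iff.mp h1)))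

/-- The translation γ₀ from HyLTL formulas over `A` and `FC` to LTL formulas over
`AP = FC ⊎ B`. -/
noncomputable def gamma0 {A FC B : Type} [Fintype B] [DecidableEq B]
    (b : A → Finset B) (hb : ∀ a, (b a).Nonempty) :
    HyLTL A FC → LTL (FC ⊕ B)
  | .flow f => .atom (Sum.inl f)
  | .act a => bEnc b hb a
  | .not φ => .not (gamma0 b hb φ)
  | .and φ ψ => .and (gamma0 b hb φ) (gamma0 b hb ψ)
  | .or φ ψ => .or (gamma0 b hb φ) (gamma0 b hb ψ)
  | .next φ => .next (gamma0 b hb φ)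
  | .untl φ ψ => .untl (gamma0 b hb φ) (gamma0 b hb ψ)
  | .rel φ ψ => .rel (gamma0 b hb φ) (gamma0 b hb ψ)

/-- The translation `γ(φ) = (⋀_{j ∈ B} ¬ bⱼ) ∧ γ₀(φ)`. -/
noncomputable def gammaTr {A FC B : Type} [Fintype B] [DecidableEq B]
    (b : A → Finset B) (hb : ∀ a, (b a).Nonempty) (φ : HyLTL A FC) : LTL (FC ⊕ B) :=
  LTL.bigConj
    (((Finset.univ : Finset B).toList.map fun j =>
        LTL.not (LTL.atom (Sum.inr j : FC ⊕ B))) ++ [gamma0 b hb φ])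
    (by simp)

/-- The discrete sequence `Σ(α)` associated with a hybrid trace `α` (0-indexed). -/
noncomputable def SigmaTrace {X A FC B : Type}
    (I : FC → FlowConstraint X) (b : A → Finset B) (α : HybridTrace X A) :
    ℕ → Set (FC ⊕ B)
  | 0 => Sum.inl '' {f | (α.traj 0).sat (I f)}
  | n + 1 => Sum.inl '' {f | (α.traj (n + 1)).sat (I f)} ∪ Sum.inr '' ↑(b (α.act n))

/-! ## Büchi automata -/

/-- A Büchi automaton over the alphabet `Λ` with states `Q`. -/
structure Buchi (Q Λ : Type) where
  init : Q
  tr : Set (Q × Λ × Q)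
  acc : Set Q

/-- A Büchi automaton accepts an infinite word (0-indexed) iff it has a run over
it visiting some accepting state infinitely often. -/
def Buchi.Accepts {Q Λ : Type} (𝒜 : Buchi Q Λ) (w : ℕ → Λ) : Prop :=
  ∃ r : ℕ → Q, r 0 = 𝒜.init ∧ (∀ n, (r n, w n, r (n + 1)) ∈ 𝒜.tr) ∧
    ∃ q ∈ 𝒜.acc, ∀ N, ∃ n, N ≤ n ∧ r n = q

/-! ## Hybrid automata with Büchi condition -/

/-- A hybrid automaton with Büchi acceptance condition (BHA) over `X` and `A`. -/
structure BHA (X A : Type) where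
  Loc : Type
  locFinite : Finite Loc
  Edg : Set (Loc × A × Loc)
  Dyn : Loc → FlowConstraint X
  Rst : Loc × A × Loc → Set (Valu X × Valu X)
  Init : Set Loc
  Final : Set Loc

/-- Acceptance of a hybrid trace by a BHA. -/
def BHA.Accepts {X A : Type} (H : BHA X A) (α : HybridTrace X A) : Prop :=
  ∃ ℓ : ℕ → H.Loc,
    ℓ 0 ∈ H.Init ∧
    (∀ i, (α.traj i).sat (H.Dyn (ℓ i)) ∧
      (ℓ i, α.act i, ℓ (i + 1)) ∈ H.Edg ∧
      ((α.traj i).lastState, (α.traj (i + 1)).firstState) ∈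
        H.Rst (ℓ i, α.act i, ℓ (i + 1))) ∧
    ∃ l ∈ H.Final, ∀ N, ∃ n, N ≤ n ∧ ℓ n = l

/-- The BHA `ℋ_φ` constructed (as in Algorithm 1, without reachability pruning) from a
Büchi automaton over the alphabet of subsets of `AP = FC ⊎ B`. -/
def HofBuchi {X A FC B Q : Type} [Finite Q] [Finite FC]
    (I : FC → FlowConstraint X) (b : A → Finset B)
    (𝒜 : Buchi Q (Set (FC ⊕ B))) : BHA X A where
  Loc := Q × Set FC
  locFinite := inferInstance
  Edg := {e | ∃ σ : Set (FC ⊕ B),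
    (e.1.1, σ, e.2.2.1) ∈ 𝒜.tr ∧
    {f | Sum.inl f ∈ σ} = e.2.2.2 ∧
    {j | Sum.inr j ∈ σ} = ↑(b e.2.1)}
  Dyn := fun l => {p | ∀ f ∈ l.2, p ∈ I f}
  Rst := fun _ => Set.univ
  Init := {l | ∃ σ : Set (FC ⊕ B),
    (𝒜.init, σ, l.1) ∈ 𝒜.tr ∧
    {f | Sum.inl f ∈ σ} = l.2 ∧
    {j : B | Sum.inr j ∈ σ} = ∅}
  Final := {l | l.1 ∈ 𝒜.acc}

/-! ## Auxiliary lemmas -/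

theorem bigConj_sat {P : Type} (w : ℕ → Set P) (i : ℕ) :
    ∀ (l : List (LTL P)) (h : l ≠ []),
      LTL.Sat w (LTL.bigConj l h) i ↔ ∀ γ ∈ l, LTL.Sat w γ i
  | [], h => absurd rfl h
  | [γ], _ => by simp [LTL.bigConj]
  | γ :: δ :: l, _ => by
      rw [LTL.bigConj]
      show LTL.Sat w γ i ∧ LTL.Sat w (LTL.bigConj (δ :: l) _) i ↔ _
      rw [bigConj_sat w i (δ :: l) (by simp)]
      simp [List.forall_mem_cons]

theorem bigConj_noFC {FC B : Type} :
    ∀ (l : List (LTL (FC ⊕ B))) (h : l ≠ []),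
      (∀ γ ∈ l, γ.noFC) → (LTL.bigConj l h).noFC
  | [], h => absurd rfl h
  | [γ], _ => fun hl => by rw [LTL.bigConj]; exact hl γ (by simp)
  | γ :: δ :: l, _ => by
      intro hl
      rw [LTL.bigConj]
      exact ⟨hl γ (by simp), bigConj_noFC (δ :: l) (by simp)
        (fun x hx => hl x (List.mem_cons_of_mem _ hx))⟩

theorem bigConj_FCpos {FC B : Type} :
    ∀ (l : List (LTL (FC ⊕ B))) (h : l ≠ []),
      (∀ γ ∈ l, γ.FCpos) → (LTL.bigConj l h).FCpos
  | [], h => absurd rfl h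
  | [γ], _ => fun hl => by rw [LTL.bigConj]; exact hl γ (by simp)
  | γ :: δ :: l, _ => by
      intro hl
      rw [LTL.bigConj]
      exact ⟨hl γ (by simp), bigConj_FCpos (δ :: l) (by simp)
        (fun x hx => hl x (List.mem_cons_of_mem _ hx))⟩

theorem bEnc_noFC {A FC B : Type} [Fintype B] [DecidableEq B]
    (b : A → Finset B) (hb : ∀ a, (b a).Nonempty) (a : A) :
    (bEnc (FC := FC) b hb a).noFC := by
  apply bigConj_noFC
  rintro γ hγ
  rcases List.mem_append.mp hγ with h | h <;>
    obtain ⟨j, -, rfl⟩ := List.mem_map.mp h <;> simp [LTL.noFC]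

theorem bEnc_FCpos {A FC B : Type} [Fintype B] [DecidableEq B]
    (b : A → Finset B) (hb : ∀ a, (b a).Nonempty) (a : A) :
    (bEnc (FC := FC) b hb a).FCpos := by
  apply bigConj_FCpos
  rintro γ hγ
  rcases List.mem_append.mp hγ with h | h <;>
    obtain ⟨j, -, rfl⟩ := List.mem_map.mp h <;> simp [LTL.FCpos, LTL.noFC]

theorem gamma0_FCpos {A FC B : Type} [Fintype B] [DecidableEq B]
    (b : A → Finset B) (hb : ∀ a, (b a).Nonempty)
    {φ : HyLTL A FC} (hφ : φ.Positive) : (gamma0 b hb φ).FCpos := by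
  induction hφ with
  | flow f => trivial
  | act a => exact bEnc_FCpos b hb a
  | nact a => exact bEnc_noFC b hb a
  | and h1 h2 ih1 ih2 => exact ⟨ih1, ih2⟩
  | or h1 h2 ih1 ih2 => exact ⟨ih1, ih2⟩
  | next h ih => exact ih
  | untl h1 h2 ih1 ih2 => exact ⟨ih1, ih2⟩
  | rel h1 h2 ih1 ih2 => exact ⟨ih1, ih2⟩

theorem bEnc_sat {A FC B : Type} [Fintype B] [DecidableEq B]
    (b : A → Finset B) (hb : ∀ a, (b a).Nonempty) (a : A)
    (w : ℕ → Set (FC ⊕ B)) (i : ℕ) :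
    LTL.Sat w (bEnc b hb a) i ↔ {j | Sum.inr j ∈ w i} = ↑(b a) := by
  rw [bEnc, bigConj_sat]
  constructor
  · intro h
    ext j
    simp only [Set.mem_setOf_eq, Finset.mem_coe]
    constructor
    · intro hj
      by_contra hj'
      have := h (LTL.not (LTL.atom (Sum.inr j)))
        (List.mem_append.mpr (Or.inr (List.mem_map.mpr
          ⟨j, Finset.mem_toList.mpr (by simp [hj']), rfl⟩)))
      exact this hj
    · intro hj
      exact h (LTL.atom (Sum.inr j))
        (List.mem_append.mpr (Or.inl (List.mem_map.mpr
          ⟨j, Finset.mem_toList.mpr hj, rfl⟩)))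
  · intro h γ hγ
    rcases List.mem_append.mp hγ with h' | h' <;>
      obtain ⟨j, hj, rfl⟩ := List.mem_map.mp h'
    · show Sum.inr j ∈ w i
      rw [Finset.mem_toList] at hj
      have : j ∈ ({j | Sum.inr j ∈ w i} : Set B) := h ▸ (Finset.mem_coe.mpr hj)
      exact this
    · show ¬ Sum.inr j ∈ w i
      rw [Finset.mem_toList, Finset.mem_sdiff] at hj
      intro hmem
      have : j ∈ (↑(b a) : Set B) := h ▸ hmem
      exact hj.2 (Finset.mem_coe.mp this)

theorem gammaTr_sat {A FC B : Type} [Fintype B] [DecidableEq B]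
    (b : A → Finset B) (hb : ∀ a, (b a).Nonempty) (φ : HyLTL A FC)
    (w : ℕ → Set (FC ⊕ B)) :
    LTL.Sat w (gammaTr b hb φ) 0 ↔
      (∀ j : B, Sum.inr j ∉ w 0) ∧ LTL.Sat w (gamma0 b hb φ) 0 := by
  rw [gammaTr, bigConj_sat]
  constructor
  · intro h
    refine ⟨fun j hj => ?_, h _ (List.mem_append.mpr (Or.inr (by simp)))⟩
    exact h (LTL.not (LTL.atom (Sum.inr j)))
      (List.mem_append.mpr (Or.inl (List.mem_map.mpr ⟨j, by simp, rfl⟩))) hj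
  · rintro ⟨h1, h2⟩ γ hγ
    rcases List.mem_append.mp hγ with h' | h'
    · obtain ⟨j, -, rfl⟩ := List.mem_map.mp h'
      exact h1 j
    · rw [List.mem_singleton.mp h']
      exact h2

theorem SigmaTrace_inl {X A FC B : Type} (I : FC → FlowConstraint X)
    (b : A → Finset B) (α : HybridTrace X A) (f : FC) (i : ℕ) :
    Sum.inl f ∈ SigmaTrace I b α i ↔ (α.traj i).sat (I f) := by
  cases i <;> simp [SigmaTrace]

theorem SigmaTrace_inr_zero {X A FC B : Type} (I : FC → FlowConstraint X)
    (b : A → Finset B) (α : HybridTrace X A) (j : B) :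
    Sum.inr j ∉ SigmaTrace I b α 0 := by
  simp [SigmaTrace]

theorem SigmaTrace_inr_succ {X A FC B : Type} (I : FC → FlowConstraint X)
    (b : A → Finset B) (α : HybridTrace X A) (j : B) (n : ℕ) :
    Sum.inr j ∈ SigmaTrace I b α (n + 1) ↔ j ∈ b (α.act n) := by
  simp [SigmaTrace]

theorem gamma0_sat {X A FC B : Type} [Fintype B] [DecidableEq B]
    (I : FC → FlowConstraint X) (b : A → Finset B)
    (hb : ∀ a, (b a).Nonempty) (hinj : Function.Injective b)
    (α : HybridTrace X A) (φ : HyLTL A FC) :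
    ∀ i, LTL.Sat (SigmaTrace I b α) (gamma0 b hb φ) i ↔ HyLTL.Sat I α φ i := by
  induction φ with
  | flow f =>
      intro i
      show Sum.inl f ∈ SigmaTrace I b α i ↔ _
      rw [SigmaTrace_inl]
      rfl
  | act a =>
      intro i
      rw [gamma0, bEnc_sat]
      cases i with
      | zero =>
          simp only [HyLTL.Sat, lt_irrefl, false_and, iff_false]
          intro h
          obtain ⟨j, hj⟩ := hb a
          have : j ∈ ({j | Sum.inr j ∈ SigmaTrace I b α 0} : Set B) := by
            rw [h]; exact Finset.mem_coe.mpr hj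
          exact SigmaTrace_inr_zero I b α j this
      | succ n =>
          have : {j | Sum.inr j ∈ SigmaTrace I b α (n + 1)} = ↑(b (α.act n)) := by
            ext j; rw [Set.mem_setOf_eq, SigmaTrace_inr_succ]; rfl
          rw [this]
          constructor
          · intro h
            exact ⟨Nat.succ_pos n, hinj (Finset.coe_injective h)⟩
          · rintro ⟨-, h⟩
            rw [show n + 1 - 1 = n from rfl] at h
            rw [h]
  | not φ ih =>
      intro i
      show ¬ _ ↔ ¬ _
      rw [ih i]
  | and φ ψ ih1 ih2 => intro i; exact and_congr (ih1 i) (ih2 i)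
  | or φ ψ ih1 ih2 => intro i; exact or_congr (ih1 i) (ih2 i)
  | next φ ih => intro i; exact ih (i + 1)
  | untl φ ψ ih1 ih2 =>
      intro i
      show (∃ j, _ ∧ _ ∧ _) ↔ _
      constructor
      · rintro ⟨j, hij, hψ, hφ⟩
        exact ⟨j, hij, (ih2 j).mp hψ, fun k h1 h2 => (ih1 k).mp (hφ k h1 h2)⟩
      · rintro ⟨j, hij, hψ, hφ⟩
        exact ⟨j, hij, (ih2 j).mpr hψ, fun k h1 h2 => (ih1 k).mpr (hφ k h1 h2)⟩
  | rel φ ψ ih1 ih2 =>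
      intro i
      show (∀ j, _ → _ → _) ↔ _
      constructor
      · intro h j hij hφ
        exact (ih2 j).mp (h j hij fun k h1 h2 hk => hφ k h1 h2 ((ih1 k).mp hk))
      · intro h j hij hφ
        exact (ih2 j).mpr (h j hij fun k h1 h2 hk => hφ k h1 h2 ((ih1 k).mpr hk))

theorem noFC_sat {FC B : Type} {w w' : ℕ → Set (FC ⊕ B)}
    (hB : ∀ i (j : B), Sum.inr j ∈ w i ↔ Sum.inr j ∈ w' i) :
    ∀ (γ : LTL (FC ⊕ B)), γ.noFC → ∀ i, (LTL.Sat w γ i ↔ LTL.Sat w' γ i) := by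
  intro γ
  induction γ with
  | atom p =>
      cases p with
      | inl f => intro h; exact absurd h id
      | inr j => intro _ i; exact hB i j
  | not γ ih => intro h i; exact not_congr (ih h i)
  | and γ δ ih1 ih2 => intro h i; exact and_congr (ih1 h.1 i) (ih2 h.2 i)
  | or γ δ ih1 ih2 => intro h i; exact or_congr (ih1 h.1 i) (ih2 h.2 i)
  | next γ ih => intro h i; exact ih h (i + 1)
  | untl γ δ ih1 ih2 =>
      intro h i
      show (∃ j, _ ∧ _ ∧ _) ↔ _
      constructor
      · rintro ⟨j, hij, hδ, hγ⟩
        exact ⟨j, hij, (ih2 h.2 j).mp hδ, fun k h1 h2 => (ih1 h.1 k).mp (hγ k h1 h2)⟩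
      · rintro ⟨j, hij, hδ, hγ⟩
        exact ⟨j, hij, (ih2 h.2 j).mpr hδ, fun k h1 h2 => (ih1 h.1 k).mpr (hγ k h1 h2)⟩
  | rel γ δ ih1 ih2 =>
      intro h i
      show (∀ j, _ → _ → _) ↔ _
      constructor
      · intro hs j hij hγ
        exact (ih2 h.2 j).mp (hs j hij fun k h1 h2 hk => hγ k h1 h2 ((ih1 h.1 k).mp hk))
      · intro hs j hij hγ
        exact (ih2 h.2 j).mpr (hs j hij fun k h1 h2 hk => hγ k h1 h2 ((ih1 h.1 k).mpr hk))

theorem FCpos_sat {FC B : Type} {w w' : ℕ → Set (FC ⊕ B)}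
    (hsub : ∀ i, w i ⊆ w' i)
    (hB : ∀ i (j : B), Sum.inr j ∈ w i ↔ Sum.inr j ∈ w' i) :
    ∀ (γ : LTL (FC ⊕ B)), γ.FCpos → ∀ i, LTL.Sat w γ i → LTL.Sat w' γ i := by
  intro γ
  induction γ with
  | atom p => intro _ i h; exact hsub i h
  | not γ ih => intro h i; exact (not_congr (noFC_sat hB γ h i)).mp
  | and γ δ ih1 ih2 => intro h i hs; exact ⟨ih1 h.1 i hs.1, ih2 h.2 i hs.2⟩
  | or γ δ ih1 ih2 =>
      intro h i hs
      exact hs.imp (ih1 h.1 i) (ih2 h.2 i)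
  | next γ ih => intro h i; exact ih h (i + 1)
  | untl γ δ ih1 ih2 =>
      rintro h i ⟨j, hij, hδ, hγ⟩
      exact ⟨j, hij, ih2 h.2 j hδ, fun k h1 h2 => ih1 h.1 k (hγ k h1 h2)⟩
  | rel γ δ ih1 ih2 =>
      intro h i hs j hij hγ
      exact ih2 h.2 j (hs j hij fun k h1 h2 hk => hγ k h1 h2 (ih1 h.1 k hk))

theorem pigeonhole {L : Type} [Finite L] (ℓ : ℕ → L) {S : Set ℕ}
    (hS : ∀ N, ∃ n, N ≤ n ∧ n ∈ S) :
    ∃ l, ∀ N, ∃ n, N ≤ n ∧ n ∈ S ∧ ℓ n = l := by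
  by_contra h
  push_neg at h
  choose N hN using h
  haveI : Nonempty L := ⟨ℓ 0⟩
  obtain ⟨M, hM⟩ := Finite.exists_le N
  obtain ⟨n, hMn, hnS⟩ := hS M
  exact hN (ℓ n) n (le_trans (hM (ℓ n)) hMn) hnS rfl

theorem stmt8 {X A FC B Q : Type} [Fintype X] [Fintype A] [Fintype FC]
    [Fintype B] [DecidableEq B] [Finite Q]
    (I : FC → FlowConstraint X) (b : A → Finset B)
    (hb : ∀ a, (b a).Nonempty) (hinj : Function.Injective b)
    (φ : HyLTL A FC) (hφ : φ.Positive)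
    (𝒜 : Buchi Q (Set (FC ⊕ B)))
    (hlang : ∀ w : ℕ → Set (FC ⊕ B), 𝒜.Accepts w ↔ LTL.Sat w (gammaTr b hb φ) 0)
    (α : HybridTrace X A) :
    (HofBuchi I b 𝒜).Accepts α ↔ HyLTL.Sat I α φ 0 := by
  constructor
  · rintro ⟨ℓ, hinit, hstep, l, hlfin, hlio⟩
    obtain ⟨σ0, hσ0tr, hσ0FC, hσ0B⟩ := hinit
    choose σ hσtr hσFC hσB using fun i => (hstep i).2.1
    set w : ℕ → Set (FC ⊕ B) := fun i => Nat.rec σ0 (fun n _ => σ n) i with hw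
    have hacc : 𝒜.Accepts w := by
      refine ⟨fun i => Nat.rec 𝒜.init (fun n _ => (ℓ n).1) i, rfl, ?_, ?_⟩
      · intro n
        cases n with
        | zero => exact hσ0tr
        | succ n => exact hσtr n
      · refine ⟨l.1, hlfin, fun N => ?_⟩
        obtain ⟨n, hNn, hn⟩ := hlio N
        exact ⟨n + 1, le_trans hNn (Nat.le_succ n), by simp [hn]⟩
    have hg := (gammaTr_sat b hb φ w).mp ((hlang w).mp hacc)
    -- trajectory satisfies each flow constraint in its location's set
    have hdyn : ∀ i f, f ∈ (ℓ i).2 → (α.traj i).sat (I f) := by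
      intro i f hf t ht
      exact (hstep i).1 t ht f hf
    have hsub : ∀ i, w i ⊆ SigmaTrace I b α i := by
      intro i x hx
      cases i with
      | zero =>
          cases x with
          | inl f =>
              rw [SigmaTrace_inl]
              exact hdyn 0 f (hσ0FC ▸ hx)
          | inr j =>
              exact absurd (hσ0B ▸ hx : j ∈ (∅ : Set B)) (Set.notMem_empty j)
      | succ n =>
          cases x with
          | inl f =>
              rw [SigmaTrace_inl]
              exact hdyn (n + 1) f (hσFC n ▸ hx)
          | inr j =>
              rw [SigmaTrace_inr_succ]
              exact Finset.mem_coe.mp (hσB n ▸ hx : j ∈ (↑(b (α.act n)) : Set B))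
    have hB : ∀ i (j : B), Sum.inr j ∈ w i ↔ Sum.inr j ∈ SigmaTrace I b α i := by
      intro i j
      cases i with
      | zero =>
          constructor
          · intro hx
            exact absurd (hσ0B ▸ hx : j ∈ (∅ : Set B)) (Set.notMem_empty j)
          · intro hx
            exact absurd hx (SigmaTrace_inr_zero I b α j)
      | succ n =>
          rw [SigmaTrace_inr_succ]
          constructor
          · intro hx
            exact Finset.mem_coe.mp (hσB n ▸ hx : j ∈ (↑(b (α.act n)) : Set B))
          · intro hx
            exact (show j ∈ ({j | Sum.inr j ∈ σ n} : Set B) from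
              (hσB n).symm ▸ Finset.mem_coe.mpr hx)
    have hSig : LTL.Sat (SigmaTrace I b α) (gamma0 b hb φ) 0 :=
      FCpos_sat hsub hB _ (gamma0_FCpos b hb hφ) 0 hg.2
    exact (gamma0_sat I b hb hinj α φ 0).mp hSig
  · intro hφsat
    have hSig : LTL.Sat (SigmaTrace I b α) (gammaTr b hb φ) 0 :=
      (gammaTr_sat b hb φ _).mpr ⟨SigmaTrace_inr_zero I b α,
        (gamma0_sat I b hb hinj α φ 0).mpr hφsat⟩
    obtain ⟨r, hr0, hrtr, q, hqacc, hqio⟩ := (hlang _).mpr hSig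
    refine ⟨fun i => (r (i + 1), {f | Sum.inl f ∈ SigmaTrace I b α i}), ?_, ?_, ?_⟩
    · exact ⟨SigmaTrace I b α 0, by rw [← hr0]; exact hrtr 0, rfl,
        Set.eq_empty_iff_forall_notMem.mpr fun j => SigmaTrace_inr_zero I b α j⟩
    · intro i
      refine ⟨?_, ?_, trivial⟩
      · intro t ht f hf
        have : (α.traj i).sat (I f) := (SigmaTrace_inl I b α f i).mp hf
        exact this t ht
      · refine ⟨SigmaTrace I b α (i + 1), hrtr (i + 1), rfl, ?_⟩
        ext j
        rw [Set.mem_setOf_eq, SigmaTrace_inr_succ]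
        rfl
    · have hS : ∀ N, ∃ n, N ≤ n ∧ n ∈ {m | r (m + 1) = q} := by
        intro N
        obtain ⟨n, hNn, hn⟩ := hqio (N + 1)
        obtain ⟨m, rfl⟩ := Nat.exists_eq_add_of_le hNn
        exact ⟨N + m, by omega, by show r (N + m + 1) = q; rw [show N + m + 1 = N + 1 + m by omega]; exact hn⟩
      obtain ⟨loc, hloc⟩ := pigeonhole
        (fun i => ((r (i + 1), {f | Sum.inl f ∈ SigmaTrace I b α i}) : Q × Set FC)) hS
      refine ⟨loc, ?_, fun N => ?_⟩
      · obtain ⟨n, -, hnS, hn⟩ := hloc 0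
        show loc.1 ∈ 𝒜.acc
        rw [← hn]
        exact hnS ▸ hqacc
      · obtain ⟨n, hNn, -, hn⟩ := hloc N
        exact ⟨n, hNn, hn⟩
end

section
/- Let φ be a HyLTL⁺ formula over A and FC, and let 𝒜 = (Q, q₀, δ, F) be a Büchi automaton over the alphabet of subsets of AP = FC ⊎ B whose accepted language is exactly the set of discrete sequences Σ with Σ,1 ⊨ γ(φ). Let ℋ_φ be the BHA constructed from 𝒜 as described. Then for every hybrid trace α over A and X, if α,1 ⊨ φ then ℋ_φ accepts α. -/
/-! ### Auxiliary lemmas for the proof -/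

lemma sat_bigConj {P : Type} (w : ℕ → Set P) :
    ∀ (l : List (LTL P)) (h : l ≠ []) (i : ℕ),
      LTL.Sat w (LTL.bigConj l h) i ↔ ∀ γ ∈ l, LTL.Sat w γ i := by
  intro l
  induction l with
  | nil => intro h; exact absurd rfl h
  | cons γ l ih =>
    intro h i
    cases l with
    | nil => simp [LTL.bigConj]
    | cons δ l =>
      have h2 := ih (by simp) i
      show LTL.Sat w γ i ∧ _ ↔ _
      rw [h2]
      simp

lemma inr_mem_Sigma {X A FC B : Type}
    (I : FC → FlowConstraint X) (b : A → Finset B) (α : HybridTrace X A)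
    (j : B) :
    ∀ i, (Sum.inr j ∈ SigmaTrace I b α i ↔ ∃ n, i = n + 1 ∧ j ∈ b (α.act n)) := by
  intro i
  cases i with
  | zero => simp [SigmaTrace]
  | succ n => simp [SigmaTrace]

lemma inl_mem_Sigma {X A FC B : Type}
    (I : FC → FlowConstraint X) (b : A → Finset B) (α : HybridTrace X A)
    (f : FC) :
    ∀ i, (Sum.inl f ∈ SigmaTrace I b α i ↔ (α.traj i).sat (I f)) := by
  intro i
  cases i with
  | zero => simp [SigmaTrace]
  | succ n => simp [SigmaTrace]

lemma sat_bEnc {X A FC B : Type} [Fintype B] [DecidableEq B]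
    (I : FC → FlowConstraint X) (b : A → Finset B) (hb : ∀ a, (b a).Nonempty)
    (α : HybridTrace X A) (a : A) (i : ℕ) :
    LTL.Sat (SigmaTrace I b α) (bEnc b hb a) i ↔
      ({j : B | Sum.inr j ∈ SigmaTrace I b α i} = ↑(b a)) := by
  unfold bEnc
  rw [sat_bigConj]
  constructor
  · intro h
    ext j
    simp only [Set.mem_setOf_eq, Finset.coe_mem, Finset.mem_coe]
    constructor
    · intro hj
      by_contra hja
      have : LTL.Sat (SigmaTrace I b α) (LTL.not (LTL.atom (Sum.inr j : FC ⊕ B))) i := by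
        apply h
        simp only [List.mem_append, List.mem_map]
        right
        exact ⟨j, by simp [Finset.mem_toList, hja], rfl⟩
      exact this hj
    · intro hj
      have : LTL.Sat (SigmaTrace I b α) (LTL.atom (Sum.inr j : FC ⊕ B)) i := by
        apply h
        simp only [List.mem_append, List.mem_map]
        left
        exact ⟨j, by simp [Finset.mem_toList, hj], rfl⟩
      exact this
  · intro h γ hγ
    simp only [List.mem_append, List.mem_map] at hγ
    rcases hγ with ⟨j, hj, rfl⟩ | ⟨j, hj, rfl⟩
    · rw [Finset.mem_toList] at hj
      show Sum.inr j ∈ SigmaTrace I b α i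
      have : j ∈ ({j : B | Sum.inr j ∈ SigmaTrace I b α i}) := by
        rw [h]; exact_mod_cast hj
      exact this
    · rw [Finset.mem_toList, Finset.mem_sdiff] at hj
      show ¬ LTL.Sat (SigmaTrace I b α) (LTL.atom (Sum.inr j : FC ⊕ B)) i
      intro hmem
      have : j ∈ ({j : B | Sum.inr j ∈ SigmaTrace I b α i}) := hmem
      rw [h] at this
      exact hj.2 (by exact_mod_cast this)

lemma gamma0_iff {X A FC B : Type} [Fintype B] [DecidableEq B]
    (I : FC → FlowConstraint X) (b : A → Finset B) (hb : ∀ a, (b a).Nonempty)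
    (hinj : Function.Injective b) (α : HybridTrace X A) :
    ∀ (φ : HyLTL A FC) (i : ℕ),
      HyLTL.Sat I α φ i ↔ LTL.Sat (SigmaTrace I b α) (gamma0 b hb φ) i := by
  intro φ
  induction φ with
  | flow f =>
    intro i
    show (α.traj i).sat (I f) ↔ Sum.inl f ∈ SigmaTrace I b α i
    exact (inl_mem_Sigma I b α f i).symm
  | act a =>
    intro i
    show (0 < i ∧ α.act (i - 1) = a) ↔ _
    rw [show gamma0 b hb (.act a) = bEnc b hb a from rfl, sat_bEnc I b hb α a i]
    cases i with
    | zero =>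
      simp only [lt_irrefl, false_and, false_iff]
      intro h
      have : (∅ : Set B) = ↑(b a) := by
        rw [← h]
        ext j
        simp [inr_mem_Sigma I b α j 0]
      rcases hb a with ⟨j, hj⟩
      have : j ∈ (∅ : Set B) := by rw [this]; exact_mod_cast hj
      exact this
    | succ n =>
      have hset : {j : B | Sum.inr j ∈ SigmaTrace I b α (n + 1)} = ↑(b (α.act n)) := by
        ext j
        simp [inr_mem_Sigma I b α j (n + 1)]
      rw [hset]
      constructor
      · rintro ⟨-, h⟩
        simp only [Nat.add_sub_cancel] at h
        rw [h]
      · intro h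
        have : b (α.act n) = b a := by exact_mod_cast h
        exact ⟨Nat.succ_pos n, by simpa using hinj this⟩
  | not φ ih =>
    intro i
    show ¬ _ ↔ ¬ _
    rw [ih]
  | and φ ψ ihφ ihψ =>
    intro i
    show _ ∧ _ ↔ _ ∧ _
    rw [ihφ, ihψ]
  | or φ ψ ihφ ihψ =>
    intro i
    show _ ∨ _ ↔ _ ∨ _
    rw [ihφ, ihψ]
  | next φ ih =>
    intro i
    show HyLTL.Sat I α φ (i + 1) ↔ _
    exact ih (i + 1)
  | untl φ ψ ihφ ihψ =>
    intro i
    show (∃ j, i ≤ j ∧ _ ∧ _) ↔ (∃ j, i ≤ j ∧ _ ∧ _)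
    constructor
    · rintro ⟨j, hij, hψ, hφ⟩
      exact ⟨j, hij, (ihψ j).mp hψ, fun k h1 h2 => (ihφ k).mp (hφ k h1 h2)⟩
    · rintro ⟨j, hij, hψ, hφ⟩
      exact ⟨j, hij, (ihψ j).mpr hψ, fun k h1 h2 => (ihφ k).mpr (hφ k h1 h2)⟩
  | rel φ ψ ihφ ihψ =>
    intro i
    show (∀ j, i ≤ j → _) ↔ (∀ j, i ≤ j → _)
    constructor
    · intro h j hij hnot
      exact (ihψ j).mp (h j hij fun k h1 h2 hk => hnot k h1 h2 ((ihφ k).mp hk))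
    · intro h j hij hnot
      exact (ihψ j).mpr (h j hij fun k h1 h2 hk => hnot k h1 h2 ((ihφ k).mpr hk))

lemma exists_ge_of_infinite {s : Set ℕ} (hs : s.Infinite) (N : ℕ) :
    ∃ n ∈ s, N ≤ n := by
  rcases hs.exists_gt N with ⟨n, hn, hlt⟩
  exact ⟨n, hn, hlt.le⟩

lemma infinite_of_forall_exists_ge {s : Set ℕ} (h : ∀ N, ∃ n ∈ s, N ≤ n) :
    s.Infinite := by
  intro hfin
  rcases (hfin.bddAbove) with ⟨M, hM⟩
  rcases h (M + 1) with ⟨n, hn, hge⟩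
  exact absurd (hM hn) (by omega)

lemma pigeonhole_infinite {β : Type} [Finite β] {s : Set ℕ} (hs : s.Infinite)
    (g : ℕ → β) : ∃ v, {n ∈ s | g n = v}.Infinite := by
  by_contra h
  push_neg at h
  have : s = ⋃ v, {n ∈ s | g n = v} := by
    ext n
    simp only [Set.mem_iUnion, Set.mem_setOf_eq]
    exact ⟨fun hn => ⟨g n, hn, rfl⟩, fun ⟨v, hn, _⟩ => hn⟩
  exact hs (this ▸ Set.finite_iUnion h)

theorem stmt9 {X A FC B Q : Type} [Fintype X] [Fintype A] [Fintype FC]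
    [Fintype B] [DecidableEq B] [Finite Q]
    (I : FC → FlowConstraint X) (b : A → Finset B)
    (hb : ∀ a, (b a).Nonempty) (hinj : Function.Injective b)
    (φ : HyLTL A FC) (hφ : φ.Positive)
    (𝒜 : Buchi Q (Set (FC ⊕ B)))
    (hlang : ∀ w : ℕ → Set (FC ⊕ B), 𝒜.Accepts w ↔ LTL.Sat w (gammaTr b hb φ) 0)
    (α : HybridTrace X A) :
    HyLTL.Sat I α φ 0 → (HofBuchi I b 𝒜).Accepts α := by
  intro hsat
  -- Σ(α) satisfies γ(φ)
  have hB0 : ∀ j : B, Sum.inr j ∉ SigmaTrace I b α 0 := by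
    intro j hj
    rcases (inr_mem_Sigma I b α j 0).mp hj with ⟨n, hn, -⟩
    exact Nat.succ_ne_zero n hn.symm
  have hγ : LTL.Sat (SigmaTrace I b α) (gammaTr b hb φ) 0 := by
    unfold gammaTr
    rw [sat_bigConj]
    intro γ hγ
    simp only [List.mem_append, List.mem_map, List.mem_singleton] at hγ
    rcases hγ with ⟨j, -, rfl⟩ | rfl
    · exact fun h => hB0 j h
    · exact (gamma0_iff I b hb hinj α φ 0).mp hsat
  -- a run of 𝒜 over Σ(α)
  rcases (hlang (SigmaTrace I b α)).mpr hγ with ⟨r, hr0, hrtr, q, hqacc, hqinf⟩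
  -- the candidate sequence of locations
  set Cs : ℕ → Set FC := fun i => {f | Sum.inl f ∈ SigmaTrace I b α i} with hCs
  have hCeq : ∀ i, Cs i = {f | (α.traj i).sat (I f)} := by
    intro i; ext f; exact inl_mem_Sigma I b α f i
  have hBeq : ∀ i, {j : B | Sum.inr j ∈ SigmaTrace I b α (i + 1)} = ↑(b (α.act i)) := by
    intro i; ext j; simp [inr_mem_Sigma I b α j (i + 1)]
  set ℓ : ℕ → Q × Set FC := fun i => (r (i + 1), Cs i) with hℓ
  refine ⟨ℓ, ?_, ?_, ?_⟩
  · -- initial condition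
    refine ⟨SigmaTrace I b α 0, ?_, rfl, ?_⟩
    · have := hrtr 0
      rwa [hr0] at this
    · ext j
      simp only [Set.mem_setOf_eq, Set.mem_empty_iff_false, iff_false]
      exact hB0 j
  · -- transition conditions
    intro i
    refine ⟨?_, ?_, Set.mem_univ _⟩
    · -- dynamics
      intro t ht f hf
      have hf' : f ∈ Cs i := hf
      rw [hCeq i] at hf'
      exact hf' t ht
    · -- edge
      refine ⟨SigmaTrace I b α (i + 1), hrtr (i + 1), rfl, hBeq i⟩
  · -- Büchi condition
    have hsinf : {n : ℕ | r (n + 1) = q}.Infinite := by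
      apply infinite_of_forall_exists_ge
      intro N
      rcases hqinf (N + 1) with ⟨n, hn, hrn⟩
      refine ⟨n - 1, ?_, by omega⟩
      show r (n - 1 + 1) = q
      rwa [show n - 1 + 1 = n by omega]
    rcases pigeonhole_infinite hsinf ℓ with ⟨l, hlinf⟩
    have hlne : {n ∈ {n : ℕ | r (n + 1) = q} | ℓ n = l}.Nonempty := hlinf.nonempty
    rcases hlne with ⟨n₀, hn₀q, hn₀l⟩
    refine ⟨l, ?_, ?_⟩
    · show l.1 ∈ 𝒜.acc
      rw [← hn₀l]
      show r (n₀ + 1) ∈ 𝒜.acc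
      rw [hn₀q]
      exact hqacc
    · intro N
      rcases exists_ge_of_infinite hlinf N with ⟨n, hn, hge⟩
      exact ⟨n, hge, hn.2⟩
end
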